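/- (Wei duality.) Let C ⊆ F_q^n be a linear code of dimension k, and let C^⊥ = {w ∈ F_q^n : w·c = 0 for all c ∈ C} be its Euclidean dual, which has dimension n−k. Then {d_r(C) : 1 ≤ r ≤ k} = {1, 2, …, n} ∖ {n + 1 − d_r(C^⊥) : 1 ≤ r ≤ n−k}. -/

import Mathlib

open Classical in
/-- Support of a linear code. -/
noncomputable def codeSupp {F ι : Type*} [Field F] [Fintype ι]
    (C : Submodule F (ι → F)) : Finset ι :=
  Finset.univ.filter (fun i => ∃ c ∈ C, c i ≠ 0)

/-- The `r`-th generalized Hamming weight of a linear code: the minimum cardinality of the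
support of an `r`-dimensional subcode. -/
noncomputable def GHW {F ι : Type*} [Field F] [Fintype ι]
    (C : Submodule F (ι → F)) (r : ℕ) : ℕ :=
  sInf {k | ∃ C' : Submodule F (ι → F),
    C' ≤ C ∧ Module.finrank F C' = r ∧ (codeSupp C').card = k}

/-- The Euclidean dual of a linear code. -/
def dualCode {F : Type*} [Field F] {n : ℕ} (C : Submodule F (Fin n → F)) :
    Submodule F (Fin n → F) where
  carrier := {w | ∀ c ∈ C, ∑ i, w i * c i = 0}
  add_mem' := by
    intro a b ha hb c hc
    simp only [Pi.add_apply, add_mul]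
    rw [Finset.sum_add_distrib, ha c hc, hb c hc, add_zero]
  zero_mem' := by intro c hc; simp
  smul_mem' := by
    intro t a ha c hc
    simp only [Pi.smul_apply, smul_eq_mul, mul_assoc, ← Finset.mul_sum, ha c hc, mul_zero]


section WeiAux


set_option linter.unusedSectionVars false
open Module Submodule

variable {F : Type*} [Field F] {ι : Type*} [Fintype ι]

/-- Subspace of vectors supported inside `I`. -/
def coordSub (F : Type*) [Field F] {ι : Type*} (I : Finset ι) : Submodule F (ι → F) where
  carrier := {v | ∀ i ∉ I, v i = 0}
  add_mem' := by intro a b ha hb i hi; simp [ha i hi, hb i hi]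
  zero_mem' := by intro i _; rfl
  smul_mem' := by intro t a ha i hi; simp [ha i hi]

lemma mem_coordSub {I : Finset ι} {v : ι → F} : v ∈ coordSub F I ↔ ∀ i ∉ I, v i = 0 := Iff.rfl

lemma coordSub_mono {I J : Finset ι} (h : I ⊆ J) : coordSub F I ≤ coordSub F J :=
  fun v hv i hi => hv i (fun hI => hi (h hI))

/-- The dual of a code, in a general coordinate set. -/
def dualSub (C : Submodule F (ι → F)) : Submodule F (ι → F) where
  carrier := {w | ∀ c ∈ C, ∑ i, w i * c i = 0}
  add_mem' := by
    intro a b ha hb c hc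
    simp only [Pi.add_apply, add_mul]
    rw [Finset.sum_add_distrib, ha c hc, hb c hc, add_zero]
  zero_mem' := by intro c hc; simp
  smul_mem' := by
    intro t a ha c hc
    simp only [Pi.smul_apply, smul_eq_mul, mul_assoc, ← Finset.mul_sum, ha c hc, mul_zero]

lemma mem_dualSub {C : Submodule F (ι → F)} {w : ι → F} :
    w ∈ dualSub C ↔ ∀ c ∈ C, ∑ i, w i * c i = 0 := Iff.rfl

/-- The dot-product map to the dual space. -/
noncomputable def dotMap (F : Type*) [Field F] (ι : Type*) [Fintype ι] :
    (ι → F) →ₗ[F] Module.Dual F (ι → F) where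
  toFun v := ∑ i, v i • (LinearMap.proj i : (ι → F) →ₗ[F] F)
  map_add' a b := by simp [add_smul, Finset.sum_add_distrib]
  map_smul' t a := by simp [Finset.smul_sum, mul_smul]

lemma dotMap_apply (v c : ι → F) : dotMap F ι v c = ∑ i, v i * c i := by
  simp [dotMap, LinearMap.proj]

lemma dotMap_injective [DecidableEq ι] : Function.Injective (dotMap F ι) := by
  rw [injective_iff_map_eq_zero]
  intro v hv
  funext j
  have := congrArg (fun f : Module.Dual F (ι → F) => f (Pi.single j 1)) hv
  simpa [dotMap_apply, Pi.single_apply, mul_ite, Finset.sum_ite_eq'] using this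

lemma dotMap_bijective [DecidableEq ι] : Function.Bijective (dotMap F ι) := by
  refine ⟨dotMap_injective, ?_⟩
  rw [← LinearMap.range_eq_top]
  apply Submodule.eq_top_of_finrank_eq
  rw [LinearMap.finrank_range_of_inj dotMap_injective, Subspace.dual_finrank_eq]

/-- Dimension formula for the dual code. -/
lemma finrank_dualSub_add (C : Submodule F (ι → F)) :
    finrank F (dualSub C) + finrank F C = Fintype.card ι := by
  classical
  let e : (ι → F) ≃ₗ[F] Module.Dual F (ι → F) := LinearEquiv.ofBijective _ dotMap_bijective
  have h1 : dualSub C = (C.dualAnnihilator).comap (e : (ι → F) →ₗ[F] Module.Dual F (ι → F)) := by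
    ext w
    simp only [mem_dualSub, Submodule.mem_comap, Submodule.mem_dualAnnihilator]
    constructor
    · intro h c hc
      show dotMap F ι w c = 0
      rw [dotMap_apply]; exact h c hc
    · intro h c hc
      have := h c hc
      rw [← dotMap_apply]; exact this
  rw [h1, Submodule.comap_equiv_eq_map_symm]
  rw [LinearEquiv.finrank_map_eq]
  have h2 := Subspace.quotEquivAnnihilator C
  rw [← LinearEquiv.finrank_eq h2, Submodule.finrank_quotient_add_finrank,
    Module.finrank_pi]


lemma finrank_comap_subtype {M : Type*} [AddCommGroup M] [Module F M]
    (p q : Submodule F M) :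
    finrank F (q.comap p.subtype) = finrank F (p ⊓ q : Submodule F M) := by
  rw [← Submodule.map_comap_subtype]
  exact LinearEquiv.finrank_eq
    (Submodule.equivMapOfInjective p.subtype p.injective_subtype (q.comap p.subtype))

/-- Rank–nullity for the restriction of a map to a submodule. -/
lemma finrank_inf_ker_add_map {M N : Type*} [AddCommGroup M] [Module F M]
    [AddCommGroup N] [Module F N] [FiniteDimensional F M]
    (f : M →ₗ[F] N) (C : Submodule F M) :
    finrank F (C ⊓ LinearMap.ker f : Submodule F M) + finrank F (C.map f) = finrank F C := by
  have h := LinearMap.finrank_range_add_finrank_ker (f.domRestrict C)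
  rw [LinearMap.range_domRestrict, LinearMap.ker_domRestrict, finrank_comap_subtype] at h
  omega

lemma coordSub_eq_ker [DecidableEq ι] (I : Finset ι) :
    coordSub F I = LinearMap.ker
      (LinearMap.funLeft F F ((↑) : ((Iᶜ : Finset ι) : Type _) → ι)) := by
  ext v
  simp only [mem_coordSub, LinearMap.mem_ker, LinearMap.funLeft_apply, funext_iff]
  constructor
  · intro h j
    have := j.2
    rw [Finset.mem_compl] at this
    exact h j this
  · intro h i hi
    exact h ⟨i, by simpa using hi⟩

lemma finrank_coordSub [DecidableEq ι] (I : Finset ι) :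
    finrank F (coordSub F I) = I.card := by
  rw [coordSub_eq_ker]
  have hs : Function.Surjective (LinearMap.funLeft F F ((↑) : ((Iᶜ : Finset ι) : Type _) → ι)) :=
    LinearMap.funLeft_surjective_of_injective F F _ Subtype.val_injective
  have h := LinearMap.finrank_range_add_finrank_ker
    (LinearMap.funLeft F F ((↑) : ((Iᶜ : Finset ι) : Type _) → ι))
  rw [LinearMap.range_eq_top.2 hs] at h
  have h2 : finrank F (⊤ : Submodule F (((Iᶜ : Finset ι) : Type _) → F)) = Iᶜ.card := by
    rw [finrank_top, Module.finrank_pi, Fintype.card_coe]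
  rw [h2, Module.finrank_pi] at h
  have := Finset.card_add_card_compl I
  omega

lemma sum_subtype_mul (J : Finset ι) (u c : ι → F) (hu : ∀ i ∉ J, u i = 0) :
    ∑ j : (J : Type _), u j * c j = ∑ i, u i * c i := by
  rw [Finset.sum_coe_sort J (fun i => u i * c i)]
  exact Finset.sum_subset J.subset_univ (fun x _ hx => by rw [hu x hx, zero_mul])

/-- Extension by zero. -/
def extZero (F : Type*) [Field F] {ι : Type*} [DecidableEq ι] (J : Finset ι) :
    ({j // j ∈ J} → F) →ₗ[F] (ι → F) where
  toFun w := fun i => if h : i ∈ J then w ⟨i, h⟩ else 0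
  map_add' a b := by funext i; by_cases h : i ∈ J <;> simp [h]
  map_smul' t a := by funext i; by_cases h : i ∈ J <;> simp [h]

lemma extZero_mem_coordSub [DecidableEq ι] (J : Finset ι) (w : {j // j ∈ J} → F) :
    extZero F J w ∈ coordSub F J := by
  intro i hi; simp [extZero, hi]

lemma extZero_apply_mem [DecidableEq ι] (J : Finset ι) (w : {j // j ∈ J} → F) (j : {j // j ∈ J}) :
    extZero F J w j = w j := by simp [extZero]

lemma extZero_injective [DecidableEq ι] (J : Finset ι) : Function.Injective (extZero F J) := by
  intro a b h
  funext j
  have := congrFun h j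
  rwa [extZero_apply_mem, extZero_apply_mem] at this

/-- Key duality for shortened codes:
`dim (C ∩ F^I) + |Iᶜ| = dim C + dim ((C^⊥) ∩ F^(Iᶜ))`. -/
lemma finrank_inf_coordSub_duality [DecidableEq ι] (C : Submodule F (ι → F)) (I : Finset ι) :
    finrank F (C ⊓ coordSub F I : Submodule F (ι → F)) + Iᶜ.card
      = finrank F C + finrank F (dualSub C ⊓ coordSub F Iᶜ : Submodule F (ι → F)) := by
  set J : Finset ι := Iᶜ with hJ
  set π : (ι → F) →ₗ[F] ({j // j ∈ J} → F) := LinearMap.funLeft F F ((↑) : {j // j ∈ J} → ι)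
  set P : Submodule F ({j // j ∈ J} → F) := C.map π with hP
  -- Step 1 : ker π = coordSub I
  have hker : LinearMap.ker π = coordSub F I := by
    rw [coordSub_eq_ker (I := I)]
  have step1 : finrank F (C ⊓ coordSub F I : Submodule F (ι → F)) + finrank F P
      = finrank F C := by
    rw [← hker]; exact finrank_inf_ker_add_map π C
  -- Step 2 : dualSub P ≃ dualSub C ⊓ coordSub J
  have hmap : (dualSub P).map (extZero F J) = dualSub C ⊓ coordSub F J := by
    ext u
    constructor
    · rintro ⟨w, hw, rfl⟩
      refine ⟨?_, extZero_mem_coordSub J w⟩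
      intro c hc
      rw [← sum_subtype_mul J _ c (fun i hi => by simp [extZero, hi])]
      have := hw (π c) ⟨c, hc, rfl⟩
      rw [← this]
      exact Finset.sum_congr rfl (fun j _ => by rw [extZero_apply_mem]; rfl)
    · rintro ⟨hu, hmem⟩
      refine ⟨fun j => u j, ?_, ?_⟩
      · rintro p ⟨c, hc, rfl⟩
        rw [show ∑ j : {j // j ∈ J}, u j * π c j = ∑ j : {j // j ∈ J}, u j * c j from rfl,
          sum_subtype_mul J u c hmem]
        exact hu c hc
      · funext i
        by_cases h : i ∈ J <;> simp [extZero, h, hmem i]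
  have step2 : finrank F P + finrank F (dualSub C ⊓ coordSub F J : Submodule F (ι → F))
      = J.card := by
    have hd := finrank_dualSub_add P
    rw [Fintype.card_coe] at hd
    have : finrank F (dualSub P) =
        finrank F (dualSub C ⊓ coordSub F J : Submodule F (ι → F)) := by
      rw [← hmap]
      exact LinearEquiv.finrank_eq
        (Submodule.equivMapOfInjective (extZero F J) (extZero_injective J) (dualSub P))
    omega
  omega

/-- `fdim C m` : the largest dimension of a subcode supported on `m` coordinates. -/
noncomputable def fdim (C : Submodule F (ι → F)) (m : ℕ) : ℕ :=
  ((Finset.univ : Finset ι).powersetCard m).sup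
    fun I => finrank F (C ⊓ coordSub F I : Submodule F (ι → F))

lemma fdim_le_finrank (C : Submodule F (ι → F)) (m : ℕ) : fdim C m ≤ finrank F C := by
  refine Finset.sup_le fun I _ => ?_
  exact Submodule.finrank_mono inf_le_left

lemma fdim_zero (C : Submodule F (ι → F)) : fdim C 0 = 0 := by
  refine Nat.le_zero.1 (Finset.sup_le fun I hI => ?_)
  rw [Finset.mem_powersetCard_univ] at hI
  rw [Finset.card_eq_zero] at hI
  subst hI
  have : C ⊓ coordSub F (∅ : Finset ι) = ⊥ := by
    refine le_bot_iff.1 fun v hv => ?_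
    have := hv.2
    funext i
    exact this i (Finset.notMem_empty i)
  rw [this, finrank_bot]

lemma fdim_card (C : Submodule F (ι → F)) : fdim C (Fintype.card ι) = finrank F C := by
  refine le_antisymm (fdim_le_finrank C _) ?_
  have hu : (Finset.univ : Finset ι) ∈ (Finset.univ : Finset ι).powersetCard (Fintype.card ι) := by
    rw [Finset.mem_powersetCard_univ, Finset.card_univ]
  refine le_trans ?_ (Finset.le_sup hu)
  have : C ⊓ coordSub F (Finset.univ : Finset ι) = C := by
    rw [inf_eq_left]
    exact fun v _ i hi => absurd (Finset.mem_univ i) hi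
  rw [this]

lemma fdim_le_succ (C : Submodule F (ι → F)) (m : ℕ) (hm : m + 1 ≤ Fintype.card ι) :
    fdim C m ≤ fdim C (m + 1) := by
  refine Finset.sup_le fun I hI => ?_
  rw [Finset.mem_powersetCard_univ] at hI
  obtain ⟨I', hII', _, hcard⟩ := Finset.exists_subsuperset_card_eq (n := 1 + I.card) I.subset_univ
    (by omega) (by rw [hI, Finset.card_univ]; omega)
  rw [hI] at hcard
  have hI' : I' ∈ (Finset.univ : Finset ι).powersetCard (m + 1) := by
    rw [Finset.mem_powersetCard_univ, hcard, add_comm]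
  refine le_trans ?_ (Finset.le_sup hI')
  exact Submodule.finrank_mono (inf_le_inf_left C (coordSub_mono hII'))

lemma fdim_succ_le [DecidableEq ι] (C : Submodule F (ι → F)) (m : ℕ) :
    fdim C (m + 1) ≤ fdim C m + 1 := by
  refine Finset.sup_le fun I hI => ?_
  rw [Finset.mem_powersetCard_univ] at hI
  have hne : I.Nonempty := by rw [← Finset.card_pos, hI]; omega
  obtain ⟨i, hi⟩ := hne
  have herase : (I.erase i) ∈ (Finset.univ : Finset ι).powersetCard m := by
    simp [Finset.mem_powersetCard_univ, Finset.card_erase_of_mem hi, hI]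
  -- rank-nullity for evaluation at i
  have key : finrank F (C ⊓ coordSub F I : Submodule F (ι → F))
      ≤ finrank F (C ⊓ coordSub F (I.erase i) : Submodule F (ι → F)) + 1 := by
    have h := finrank_inf_ker_add_map (LinearMap.proj i : (ι → F) →ₗ[F] F)
      (C ⊓ coordSub F I)
    have h1 : (C ⊓ coordSub F I) ⊓ LinearMap.ker (LinearMap.proj i : (ι → F) →ₗ[F] F)
        = C ⊓ coordSub F (I.erase i) := by
      ext v
      simp only [Submodule.mem_inf, LinearMap.mem_ker, LinearMap.proj_apply, mem_coordSub]
      constructor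
      · rintro ⟨⟨hC, hs⟩, hvi⟩
        refine ⟨hC, fun j hj => ?_⟩
        by_cases hji : j = i
        · subst hji; exact hvi
        · exact hs j fun hjI => hj (Finset.mem_erase.2 ⟨hji, hjI⟩)
      · rintro ⟨hC, hs⟩
        exact ⟨⟨hC, fun j hj => hs j fun hje => hj (Finset.erase_subset i I hje)⟩,
          hs i (Finset.notMem_erase i I)⟩
    have h2 : finrank F (((C ⊓ coordSub F I)).map (LinearMap.proj i : (ι → F) →ₗ[F] F)) ≤ 1 := by
      have := Submodule.finrank_le (((C ⊓ coordSub F I)).map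
        (LinearMap.proj i : (ι → F) →ₗ[F] F))
      rwa [Module.finrank_self] at this
    rw [h1] at h
    omega
  refine le_trans key ?_
  have hle : finrank F (C ⊓ coordSub F (I.erase i) : Submodule F (ι → F)) ≤ fdim C m := by
    unfold fdim
    exact Finset.le_sup (f := fun I => finrank F (C ⊓ coordSub F I : Submodule F (ι → F))) herase
  omega

lemma fdim_mono (C : Submodule F (ι → F)) {m m' : ℕ} (h : m ≤ m') (h' : m' ≤ Fintype.card ι) :
    fdim C m ≤ fdim C m' := by
  induction m' with
  | zero => simpa [Nat.le_zero.1 h]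
  | succ k ih =>
    rcases Nat.lt_or_ge m (k+1) with hlt | hge
    · exact le_trans (ih (by omega) (by omega)) (fdim_le_succ C k h')
    · have : m = k + 1 := by omega
      subst this; rfl

/-- Duality for `fdim` : `fdim C m + (N - m) = dim C + fdim C⊥ (N - m)`. -/
lemma fdim_dual [DecidableEq ι] (C : Submodule F (ι → F)) (m : ℕ) (hm : m ≤ Fintype.card ι) :
    fdim C m + (Fintype.card ι - m) = finrank F C + fdim (dualSub C) (Fintype.card ι - m) := by
  have hne : ((Finset.univ : Finset ι).powersetCard m).Nonempty :=
    Finset.powersetCard_nonempty.2 (by rw [Finset.card_univ]; exact hm)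
  have hne' : ((Finset.univ : Finset ι).powersetCard (Fintype.card ι - m)).Nonempty :=
    Finset.powersetCard_nonempty.2 (by rw [Finset.card_univ]; omega)
  refine le_antisymm ?_ ?_
  · obtain ⟨I, hI, hIeq⟩ := Finset.exists_mem_eq_sup _ hne
      (fun I => finrank F (C ⊓ coordSub F I : Submodule F (ι → F)))
    rw [Finset.mem_powersetCard_univ] at hI
    have hdual := finrank_inf_coordSub_duality C I
    have hcc : Iᶜ.card = Fintype.card ι - m := by
      have := Finset.card_add_card_compl I; omega
    have hIc : Iᶜ ∈ (Finset.univ : Finset ι).powersetCard (Fintype.card ι - m) := by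
      rw [Finset.mem_powersetCard_univ, hcc]
    have hle : finrank F (dualSub C ⊓ coordSub F Iᶜ : Submodule F (ι → F))
        ≤ fdim (dualSub C) (Fintype.card ι - m) := by
      unfold fdim
      exact Finset.le_sup (f := fun I =>
        finrank F (dualSub C ⊓ coordSub F I : Submodule F (ι → F))) hIc
    have : fdim C m = finrank F (C ⊓ coordSub F I : Submodule F (ι → F)) := hIeq
    omega
  · obtain ⟨J, hJ, hJeq⟩ := Finset.exists_mem_eq_sup _ hne'
      (fun I => finrank F (dualSub C ⊓ coordSub F I : Submodule F (ι → F)))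
    rw [Finset.mem_powersetCard_univ] at hJ
    have hdual := finrank_inf_coordSub_duality C Jᶜ
    rw [compl_compl] at hdual
    have hcc : Jᶜ.card = m := by
      have := Finset.card_add_card_compl J; omega
    have hJc : Jᶜ ∈ (Finset.univ : Finset ι).powersetCard m := by
      rw [Finset.mem_powersetCard_univ, hcc]
    have hle : finrank F (C ⊓ coordSub F Jᶜ : Submodule F (ι → F)) ≤ fdim C m := by
      unfold fdim
      exact Finset.le_sup (f := fun I =>
        finrank F (C ⊓ coordSub F I : Submodule F (ι → F))) hJc
    have : fdim (dualSub C) (Fintype.card ι - m)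
        = finrank F (dualSub C ⊓ coordSub F J : Submodule F (ι → F)) := hJeq
    omega

/-- Any submodule contains a submodule of any smaller dimension. -/
lemma exists_le_finrank_eq {M : Type*} [AddCommGroup M] [Module F M] [FiniteDimensional F M]
    (V : Submodule F M) (r : ℕ) (h : r ≤ finrank F V) :
    ∃ W : Submodule F M, W ≤ V ∧ finrank F W = r := by
  let b := Module.finBasis F V
  let v : Fin r → M := fun i => (b (Fin.castLE h i) : M)
  have hli : LinearIndependent F v := by
    have : LinearIndependent F (fun i : Fin r => b (Fin.castLE h i)) :=
      b.linearIndependent.comp _ (Fin.castLE_injective h)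
    exact this.map' V.subtype (Submodule.ker_subtype V)
  refine ⟨Submodule.span F (Set.range v), ?_, ?_⟩
  · rw [Submodule.span_le]
    rintro x ⟨i, rfl⟩
    exact (b (Fin.castLE h i)).2
  · rw [finrank_span_eq_card hli, Fintype.card_fin]

open Classical in
/-- Support of a linear code. -/
noncomputable def codeSupp' {F ι : Type*} [Field F] [Fintype ι]
    (C : Submodule F (ι → F)) : Finset ι :=
  Finset.univ.filter (fun i => ∃ c ∈ C, c i ≠ 0)

noncomputable def GHW' {F ι : Type*} [Field F] [Fintype ι]
    (C : Submodule F (ι → F)) (r : ℕ) : ℕ :=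
  sInf {k | ∃ C' : Submodule F (ι → F),
    C' ≤ C ∧ Module.finrank F C' = r ∧ (codeSupp' C').card = k}

lemma mem_codeSupp' {C : Submodule F (ι → F)} {i : ι} :
    i ∈ codeSupp' C ↔ ∃ c ∈ C, c i ≠ 0 := by
  simp [codeSupp']

lemma le_coordSub_codeSupp' (C : Submodule F (ι → F)) : C ≤ coordSub F (codeSupp' C) := by
  intro v hv i hi
  rw [mem_codeSupp'] at hi
  push_neg at hi
  exact hi v hv

lemma ghw_le_iff (C : Submodule F (ι → F)) {r m : ℕ}
    (hrk : r ≤ finrank F C) (hm : m ≤ Fintype.card ι) :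
    GHW' C r ≤ m ↔ r ≤ fdim C m := by
  set S := {k | ∃ C' : Submodule F (ι → F),
    C' ≤ C ∧ Module.finrank F C' = r ∧ (codeSupp' C').card = k} with hS
  have hSne : S.Nonempty := by
    obtain ⟨W, hWle, hWr⟩ := exists_le_finrank_eq C r hrk
    exact ⟨(codeSupp' W).card, W, hWle, hWr, rfl⟩
  constructor
  · intro h
    obtain ⟨C', hC'le, hC'r, hC'card⟩ := Nat.sInf_mem hSne
    have h1 : C' ≤ C ⊓ coordSub F (codeSupp' C') :=
      le_inf hC'le (le_coordSub_codeSupp' C')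
    have h2 : r ≤ finrank F (C ⊓ coordSub F (codeSupp' C') : Submodule F (ι → F)) := by
      rw [← hC'r]; exact Submodule.finrank_mono h1
    have h3 : finrank F (C ⊓ coordSub F (codeSupp' C') : Submodule F (ι → F))
        ≤ fdim C ((codeSupp' C').card) := by
      unfold fdim
      exact Finset.le_sup (f := fun I =>
        finrank F (C ⊓ coordSub F I : Submodule F (ι → F)))
        (Finset.mem_powersetCard_univ.2 rfl)
    have hcard_le : (codeSupp' C').card ≤ m := by rw [hC'card]; exact h
    have h4 : fdim C ((codeSupp' C').card) ≤ fdim C m := fdim_mono C hcard_le hm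
    omega
  · intro h
    have hne : ((Finset.univ : Finset ι).powersetCard m).Nonempty :=
      Finset.powersetCard_nonempty.2 (by rw [Finset.card_univ]; exact hm)
    obtain ⟨I, hI, hIeq⟩ := Finset.exists_mem_eq_sup _ hne
      (fun I => finrank F (C ⊓ coordSub F I : Submodule F (ι → F)))
    rw [Finset.mem_powersetCard_univ] at hI
    have hIr : r ≤ finrank F (C ⊓ coordSub F I : Submodule F (ι → F)) := by
      have : fdim C m = finrank F (C ⊓ coordSub F I : Submodule F (ι → F)) := hIeq
      omega
    obtain ⟨W, hWle, hWr⟩ := exists_le_finrank_eq _ r hIr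
    have hsupp : codeSupp' W ⊆ I := by
      intro i hi
      rw [mem_codeSupp'] at hi
      obtain ⟨c, hcW, hci⟩ := hi
      by_contra hiI
      exact hci ((hWle hcW).2 i hiI)
    have : (codeSupp' W).card ≤ m := by
      rw [← hI]; exact Finset.card_le_card hsupp
    exact le_trans (Nat.sInf_le ⟨W, le_trans hWle inf_le_left, hWr, rfl⟩) this

lemma ghw_bounds (C : Submodule F (ι → F)) {r : ℕ} (hr : 1 ≤ r) (hrk : r ≤ finrank F C) :
    1 ≤ GHW' C r ∧ GHW' C r ≤ Fintype.card ι := by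
  constructor
  · by_contra h
    have h0 : GHW' C r ≤ 0 := by omega
    rw [ghw_le_iff C hrk (Nat.zero_le _)] at h0
    rw [fdim_zero] at h0
    omega
  · rw [ghw_le_iff C hrk le_rfl, fdim_card]
    exact hrk

/-- GHW values are exactly the jump points of `fdim`. -/
lemma ghw_jump_iff (C : Submodule F (ι → F)) {m : ℕ} (hm1 : 1 ≤ m)
    (hmN : m ≤ Fintype.card ι) :
    (∃ r : ℕ, 1 ≤ r ∧ r ≤ finrank F C ∧ GHW' C r = m) ↔
      fdim C m = fdim C (m - 1) + 1 := by
  classical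
  have hstep : fdim C m ≤ fdim C (m - 1) + 1 := by
    have := fdim_succ_le C (m - 1)
    rwa [show m - 1 + 1 = m by omega] at this
  constructor
  · rintro ⟨r, hr1, hrk, hG⟩
    have hle : r ≤ fdim C m := by
      rw [← ghw_le_iff C hrk hmN]; omega
    have hnot : ¬ r ≤ fdim C (m - 1) := by
      rw [← ghw_le_iff C hrk (by omega)]; omega
    omega
  · intro h
    set r := fdim C (m - 1) + 1 with hr
    have hrk : r ≤ finrank F C := by
      have := fdim_le_finrank C m; omega
    have h1 : GHW' C r ≤ m := by rw [ghw_le_iff C hrk hmN]; omega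
    have h2 : ¬ GHW' C r ≤ m - 1 := by rw [ghw_le_iff C hrk (by omega)]; omega
    exact ⟨r, by omega, hrk, by omega⟩

/-- Jump of `fdim C` at `m` iff no jump of the dual at `N - m + 1`. -/
lemma jump_dual_iff [DecidableEq ι] (C : Submodule F (ι → F)) {m : ℕ} (hm1 : 1 ≤ m)
    (hmN : m ≤ Fintype.card ι) :
    fdim C m = fdim C (m - 1) + 1 ↔
      ¬ (fdim (dualSub C) (Fintype.card ι - m + 1)
          = fdim (dualSub C) (Fintype.card ι - m) + 1) := by
  set N := Fintype.card ι with hN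
  have d1 := fdim_dual C m hmN
  have d2 := fdim_dual C (m - 1) (by omega)
  rw [show N - (m - 1) = N - m + 1 by omega] at d2
  have s1 : fdim C m ≤ fdim C (m - 1) + 1 := by
    have := fdim_succ_le C (m - 1)
    rwa [show m - 1 + 1 = m by omega] at this
  have s2 : fdim C (m - 1) ≤ fdim C m := fdim_mono C (by omega) hmN
  have s3 : fdim (dualSub C) (N - m + 1) ≤ fdim (dualSub C) (N - m) + 1 :=
    fdim_succ_le (dualSub C) (N - m)
  have s4 : fdim (dualSub C) (N - m) ≤ fdim (dualSub C) (N - m + 1) :=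
    fdim_mono (dualSub C) (by omega) (by omega)
  have main : ∀ A B a b k' t : ℕ, A + t = k' + a → B + (t + 1) = k' + b →
      A ≤ B + 1 → B ≤ A → b ≤ a + 1 → a ≤ b → (A = B + 1 ↔ ¬ (b = a + 1)) := by
    intros; omega
  exact main _ _ _ _ _ _ d1 d2 s1 s2 s3 s4

theorem wei_duality' {F : Type*} [Field F] {n : ℕ}
    (C : Submodule F (Fin n → F)) :
    Module.finrank F (dualSub C) = n - Module.finrank F C ∧
    {x : ℕ | ∃ r : ℕ, 1 ≤ r ∧ r ≤ Module.finrank F C ∧ GHW' C r = x} =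
      Set.Icc 1 n \
        {x : ℕ | ∃ r : ℕ, 1 ≤ r ∧ r ≤ n - Module.finrank F C ∧
          x = n + 1 - GHW' (dualSub C) r} := by
  classical
  set k := Module.finrank F C with hk
  have hN : Fintype.card (Fin n) = n := Fintype.card_fin n
  have hkn : k ≤ n := by
    have h := Submodule.finrank_le C
    rwa [Module.finrank_pi, hN] at h
  have hfd : finrank F (dualSub C) = n - k := by
    have := finrank_dualSub_add C
    rw [hN] at this
    omega
  refine ⟨hfd, ?_⟩
  ext x
  simp only [Set.mem_setOf_eq, Set.mem_diff, Set.mem_Icc]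
  constructor
  · rintro ⟨r, hr1, hrk, hGx⟩
    have hb := ghw_bounds C hr1 hrk
    rw [hN] at hb
    have hx1 : 1 ≤ x := hGx ▸ hb.1
    have hxn : x ≤ n := hGx ▸ hb.2
    have hjump : fdim C x = fdim C (x - 1) + 1 :=
      (ghw_jump_iff C hx1 (by omega)).1 ⟨r, hr1, hrk, hGx⟩
    have hdualjump := (jump_dual_iff C hx1 (by omega)).1 hjump
    rw [hN] at hdualjump
    refine ⟨⟨hx1, hxn⟩, ?_⟩
    rintro ⟨r', hr1', hr2', hxeq⟩
    have hrk' : r' ≤ finrank F (dualSub C) := by omega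
    have hb' := ghw_bounds (dualSub C) hr1' hrk'
    rw [hN] at hb'
    have hg : GHW' (dualSub C) r' = n - x + 1 := by omega
    have hj' : fdim (dualSub C) (n - x + 1) = fdim (dualSub C) (n - x + 1 - 1) + 1 :=
      (ghw_jump_iff (dualSub C) (by omega) (by omega)).1 ⟨r', hr1', hrk', hg⟩
    rw [show n - x + 1 - 1 = n - x by omega] at hj'
    exact hdualjump hj'
  · rintro ⟨⟨hx1, hxn⟩, hnot⟩
    have hjump : fdim C x = fdim C (x - 1) + 1 := by
      rw [jump_dual_iff C hx1 (by omega), hN]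
      intro hj
      rw [show n - x = n - x + 1 - 1 by omega] at hj
      obtain ⟨r', hr1', hrk', hg⟩ :=
        (ghw_jump_iff (dualSub C) (m := n - x + 1) (by omega) (by omega)).2 hj
      refine hnot ⟨r', hr1', by omega, by omega⟩
    obtain ⟨r, hr1, hrk, hGx⟩ := (ghw_jump_iff C hx1 (by omega)).2 hjump
    exact ⟨r, hr1, hrk, hGx⟩

end WeiAux




/-- **Wei duality.** For a linear code `C ⊆ F_q^n` of dimension `k`, the
dual `C^⊥` has dimension `n − k` and
`{d_r(C) : 1 ≤ r ≤ k} = {1,…,n} ∖ {n + 1 − d_r(C^⊥) : 1 ≤ r ≤ n−k}`. -/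
theorem wei_duality {F : Type*} [Field F] [Fintype F] {n : ℕ}
    (C : Submodule F (Fin n → F)) :
    Module.finrank F (dualCode C) = n - Module.finrank F C ∧
    {x : ℕ | ∃ r : ℕ, 1 ≤ r ∧ r ≤ Module.finrank F C ∧ GHW C r = x} =
      Set.Icc 1 n \
        {x : ℕ | ∃ r : ℕ, 1 ≤ r ∧ r ≤ n - Module.finrank F C ∧
          x = n + 1 - GHW (dualCode C) r} := by
  have h := wei_duality' C
  exact h
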